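/- Let G be a group and H a subgroup of G. Then there exist a compact Hausdorff topological space X and an injective group homomorphism φ : G → B(X) into the group of bijections of X such that for every g ∈ G, the bijection φ(g) is continuous if and only if g ∈ H. -/

import Mathlib

open OnePoint Filter Topology

/-- The swap of the endpoints of the unit interval is discontinuous. -/
lemma swap01_discont : ¬ Continuous (⇑(Equiv.swap (0:unitInterval) 1)) := by
  intro h
  have hne : ((0:unitInterval) : ℝ) ≠ ((1:unitInterval) : ℝ) := by norm_num
  have h01 : (0:unitInterval) ≠ 1 := fun he => hne (by rw [he])
  haveI : NeBot (𝓝[≠] (0:unitInterval)) := by infer_instance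
  have h1 : Tendsto (⇑(Equiv.swap (0:unitInterval) 1)) (𝓝[≠] (0:unitInterval)) (𝓝 1) := by
    have := (h.tendsto 0).mono_left
      (nhdsWithin_le_nhds (s := {(0:unitInterval)}ᶜ))
    simpa [Equiv.swap_apply_left] using this
  have h2 : Tendsto (⇑(Equiv.swap (0:unitInterval) 1)) (𝓝[≠] (0:unitInterval)) (𝓝 0) := by
    have hev : ∀ᶠ x in 𝓝[≠] (0:unitInterval), Equiv.swap (0:unitInterval) 1 x = x := by
      filter_upwards [self_mem_nhdsWithin,
        eventually_nhdsWithin_of_eventually_nhds (eventually_ne_nhds h01)] with x hx hx1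
      exact Equiv.swap_apply_of_ne_of_ne hx hx1
    exact Tendsto.congr' (hev.mono fun x hx => hx.symm)
      (tendsto_id.mono_left nhdsWithin_le_nhds)
  exact h01 ((tendsto_nhds_unique h2 h1))

theorem stmt_9 {G : Type u} [Group G] (H : Subgroup G) :
    ∃ (X : Type u) (_ : TopologicalSpace X) (_ : CompactSpace X) (_ : T2Space X)
      (φ : G →* Equiv.Perm X),
      Function.Injective φ ∧ ∀ g : G, Continuous ⇑(φ g) ↔ g ∈ H := by
  classical
  letI : TopologicalSpace G := ⊥
  haveI : DiscreteTopology G := ⟨rfl⟩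
  set Y := G × unitInterval with hY
  -- the twisting permutations of the interval
  let σ : G → Equiv.Perm unitInterval := fun x => if x ∈ H then 1 else Equiv.swap 0 1
  let Θ : Equiv.Perm Y := Equiv.prodShear (Equiv.refl G) σ
  -- the untwisted action
  let μ : G → Equiv.Perm Y := fun g =>
    Equiv.prodCongr (Equiv.mulLeft g) (Equiv.refl unitInterval)
  -- the twisted action
  have hψ : ∀ (g x : G) (t : unitInterval),
      (Θ * μ g * Θ⁻¹) (x, t) = (g * x, σ (g * x) ((σ x).symm t)) := fun g x t => rfl
  let ψ : G →* Equiv.Perm Y :=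
    { toFun := fun g => Θ * μ g * Θ⁻¹
      map_one' := Equiv.ext fun p => by
        obtain ⟨x, t⟩ := p
        show (Θ * μ 1 * Θ⁻¹) (x, t) = (x, t)
        rw [hψ]
        simp
      map_mul' := fun g h => Equiv.ext fun p => by
        obtain ⟨x, t⟩ := p
        show (Θ * μ (g * h) * Θ⁻¹) (x, t) = (Θ * μ g * Θ⁻¹) ((Θ * μ h * Θ⁻¹) (x, t))
        rw [hψ, hψ, hψ]
        simp [mul_assoc] }
  -- lift to the one-point compactification
  let lift : Equiv.Perm Y →* Equiv.Perm (OnePoint Y) :=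
    { toFun := Equiv.optionCongr
      map_one' := by ext p; cases p <;> rfl
      map_mul' := fun a b => by ext p; cases p <;> rfl }
  let φ : G →* Equiv.Perm (OnePoint Y) := lift.comp ψ
  refine ⟨OnePoint Y, inferInstance, inferInstance, inferInstance, φ, ?_, ?_⟩
  · -- injectivity
    intro a b hab
    have h1 := congrArg
      (fun e : Equiv.Perm (OnePoint Y) => e ((((1:G), (0:unitInterval)) : Y) : OnePoint Y)) hab
    have h2 : ((a * 1 : G), σ (a * 1) ((σ 1).symm 0)) =
        ((b * 1 : G), σ (b * 1) ((σ 1).symm 0)) := OnePoint.coe_eq_coe.mp h1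
    simpa using congrArg Prod.fst h2
  · intro g
    constructor
    · -- continuous → g ∈ H
      intro hc
      by_contra hg
      have hcoe : Continuous
          (fun t : unitInterval => ((((1:G), t) : Y) : OnePoint Y)) :=
        OnePoint.continuous_coe.comp (continuous_const.prodMk continuous_id)
      have h2 : Continuous (fun t : unitInterval => φ g ((((1:G), t) : Y) : OnePoint Y)) :=
        hc.comp hcoe
      have heq : (fun t : unitInterval => φ g ((((1:G), t) : Y) : OnePoint Y)) =
          (fun t : unitInterval =>
            (((g, Equiv.swap (0:unitInterval) 1 t) : Y) : OnePoint Y)) := by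
        funext t
        show (((Θ * μ g * Θ⁻¹) ((1:G), t) : Y) : OnePoint Y) = _
        rw [hψ]
        have hσ1 : σ 1 = 1 := if_pos H.one_mem
        have hσg : σ g = Equiv.swap 0 1 := if_neg hg
        simp [hσ1, hσg]
        rfl
      rw [heq] at h2
      have h3 : Continuous (fun t : unitInterval =>
          ((g, Equiv.swap (0:unitInterval) 1 t) : Y)) :=
        (OnePoint.isOpenEmbedding_coe.isEmbedding.continuous_iff).mpr h2
      exact swap01_discont (h3.snd)
    · -- g ∈ H → continuous
      intro hg
      have hψg : ψ g = μ g := Equiv.ext fun p => by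
        obtain ⟨x, t⟩ := p
        show (Θ * μ g * Θ⁻¹) (x, t) = ((g * x, t) : Y)
        rw [hψ]
        have hσ : σ (g * x) = σ x := by
          simp only [σ, H.mul_mem_cancel_left hg]
        rw [hσ, Equiv.apply_symm_apply]
      let eG : G ≃ₜ G :=
        { Equiv.mulLeft g with
          continuous_toFun := continuous_of_discreteTopology
          continuous_invFun := continuous_of_discreteTopology }
      let e : Y ≃ₜ Y := eG.prodCongr (Homeomorph.refl unitInterval)
      have hfun : ⇑(φ g) = ⇑(e.onePointCongr) := by
        funext p
        cases p with
        | infty => rfl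
        | coe y =>
          show ((ψ g y : Y) : OnePoint Y) = _
          rw [hψg]
          rfl
      rw [hfun]
      exact e.onePointCongr.continuous
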